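/- For every n ≥ 1, the ideal J_n of B_n generated by the S_n-invariant elements with zero constant term equals the ideal of B_n generated by the elementary symmetric polynomials e_1,…,e_n in x_1,…,x_n together with the elementary symmetric polynomials f_1,…,f_n in y_1,…,y_n (equivalently, by the power sums Σ_{i=1}^n x_i^r and Σ_{i=1}^n y_i^r for all r ≥ 1). -/

import Mathlib

open MvPolynomial

set_option maxHeartbeats 1000000
set_option synthInstance.maxHeartbeats 400000

noncomputable section

/-- the ideal `(x₁y₁, …, xₙyₙ)`. -/
abbrev Bideal (n : ℕ) : Ideal (MvPolynomial (Fin n ⊕ Fin n) ℂ) :=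
  Ideal.span (Set.range fun i : Fin n => X (Sum.inl i) * X (Sum.inr i))

/-- `B n = ℂ[x₁,…,xₙ,y₁,…,yₙ]/(x₁y₁,…,xₙyₙ)`, the `n`-th tensor power of `ℂ[x,y]/(xy)`.
The variable `x_i` is `X (Sum.inl i)` and `y_i` is `X (Sum.inr i)`. -/
abbrev B (n : ℕ) : Type := MvPolynomial (Fin n ⊕ Fin n) ℂ ⧸ Bideal n

abbrev mkB (n : ℕ) : MvPolynomial (Fin n ⊕ Fin n) ℂ →ₐ[ℂ] B n :=
  Ideal.Quotient.mkₐ ℂ (Bideal n)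

def xv (n : ℕ) (i : Fin n) : B n := mkB n (X (Sum.inl i))
def yv (n : ℕ) (i : Fin n) : B n := mkB n (X (Sum.inr i))

/-- the action of a permutation `σ ∈ Sₙ` on `B n`: `σ·xᵢ = x_{σ i}`, `σ·yᵢ = y_{σ i}`. -/
def permB (n : ℕ) (σ : Equiv.Perm (Fin n)) : B n →ₐ[ℂ] B n :=
  Ideal.Quotient.liftₐ (Bideal n)
    ((mkB n).comp (MvPolynomial.rename (Sum.map ⇑σ ⇑σ)))
    (by
      intro a ha
      have h : Bideal n ≤ RingHom.ker ((mkB n).comp (MvPolynomial.rename (Sum.map ⇑σ ⇑σ))).toRingHom := by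
        rw [Ideal.span_le]
        rintro _ ⟨i, rfl⟩
        simp only [SetLike.mem_coe, RingHom.mem_ker, AlgHom.toRingHom_eq_coe, RingHom.coe_coe,
          AlgHom.comp_apply, map_mul, rename_X, Sum.map_inl, Sum.map_inr]
        rw [← map_mul, Ideal.Quotient.mkₐ_eq_mk, Ideal.Quotient.eq_zero_iff_mem]
        exact Ideal.subset_span ⟨σ i, rfl⟩
      exact h ha)

/-- evaluation at the origin. -/
def ev0 (n : ℕ) : B n →ₐ[ℂ] ℂ :=
  Ideal.Quotient.liftₐ (Bideal n) (aeval fun _ => (0 : ℂ))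
    (by
      intro a ha
      have h : Bideal n ≤ RingHom.ker (aeval (R := ℂ) fun _ : Fin n ⊕ Fin n => (0 : ℂ)).toRingHom := by
        rw [Ideal.span_le]
        rintro _ ⟨i, rfl⟩
        simp [RingHom.mem_ker]
      exact h ha)

/-- `Jₙ`, the ideal of `B n` generated by the `Sₙ`-invariant elements vanishing at the origin. -/
def Jn (n : ℕ) : Ideal (B n) :=
  Ideal.span {p : B n | (∀ σ : Equiv.Perm (Fin n), permB n σ p = p) ∧ ev0 n p = 0}

/-- the symmetric coinvariant algebra `Rₙ = Bₙ/Jₙ`. -/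
abbrev Rn (n : ℕ) : Type := B n ⧸ Jn n

/-- the `k`-th elementary symmetric polynomial `e_k` in the `x` variables. -/
def eX (n k : ℕ) : B n :=
  ∑ S ∈ Finset.powersetCard k (Finset.univ : Finset (Fin n)), ∏ t ∈ S, xv n t

/-- the `k`-th elementary symmetric polynomial `f_k` in the `y` variables. -/
def fY (n k : ℕ) : B n :=
  ∑ S ∈ Finset.powersetCard k (Finset.univ : Finset (Fin n)), ∏ t ∈ S, yv n t

/-- the generating set `S^n_{i,j}` of the ideal `I^n_{i,j}`:
`e₁,…,e_{i−1}`, all `x_I` with `|I| = i`, `f₁,…,f_{j−1}`, all `y_J` with `|J| = j`. -/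
def Sij (n i j : ℕ) : Set (B n) :=
  {p | ∃ k, 1 ≤ k ∧ k < i ∧ p = eX n k} ∪
  {p | ∃ I : Finset (Fin n), I.card = i ∧ p = ∏ t ∈ I, xv n t} ∪
  {p | ∃ k, 1 ≤ k ∧ k < j ∧ p = fY n k} ∪
  {p | ∃ J : Finset (Fin n), J.card = j ∧ p = ∏ t ∈ J, yv n t}

/-- the ideal `I^n_{i,j}`; `R^n_{i,j} = B n ⧸ Iij n i j`. -/
def Iij (n i j : ℕ) : Ideal (B n) := Ideal.span (Sij n i j)

namespace JnAux

open Finsupp Finset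

variable {n : ℕ}

/-- the diagonal permutation of `Fin n ⊕ Fin n` induced by `σ`. -/
def φD (n : ℕ) : Equiv.Perm (Fin n) →* Equiv.Perm (Fin n ⊕ Fin n) where
  toFun σ := Equiv.sumCongr σ σ
  map_one' := by ext x; cases x <;> rfl
  map_mul' τ σ := by ext x; cases x <;> rfl

lemma φD_coe (σ : Equiv.Perm (Fin n)) : ⇑(φD n σ) = Sum.map ⇑σ ⇑σ := rfl

section Orbit

variable {ι : Type} [DecidableEq ι] (φ : Equiv.Perm (Fin n) →* Equiv.Perm ι)

/-- the orbit of an exponent vector under the permutation action. -/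
def orb (a : ι →₀ ℕ) : Finset (ι →₀ ℕ) :=
  Finset.image (fun σ => Finsupp.mapDomain ⇑(φ σ) a) Finset.univ

/-- the orbit sum of a monomial. -/
def osum (a : ι →₀ ℕ) : MvPolynomial ι ℂ :=
  ∑ e ∈ orb φ a, MvPolynomial.monomial e 1

lemma mem_orb {a e : ι →₀ ℕ} :
    e ∈ orb φ a ↔ ∃ σ, Finsupp.mapDomain ⇑(φ σ) a = e := by
  simp [orb]

lemma self_mem_orb (a : ι →₀ ℕ) : a ∈ orb φ a :=
  (mem_orb φ).mpr ⟨1, by simp [map_one, Finsupp.mapDomain_id]⟩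

lemma mapDomain_mem_orb {a e : ι →₀ ℕ} (τ : Equiv.Perm (Fin n)) (he : e ∈ orb φ a) :
    Finsupp.mapDomain ⇑(φ τ) e ∈ orb φ a := by
  obtain ⟨σ, rfl⟩ := (mem_orb φ).mp he
  exact (mem_orb φ).mpr ⟨τ * σ, by
    rw [map_mul, Equiv.Perm.coe_mul, Finsupp.mapDomain_comp]⟩

lemma image_orb (τ : Equiv.Perm (Fin n)) (a : ι →₀ ℕ) :
    Finset.image (Finsupp.mapDomain ⇑(φ τ)) (orb φ a) = orb φ a := by
  apply Finset.Subset.antisymm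
  · intro e he
    obtain ⟨x, hx, rfl⟩ := Finset.mem_image.mp he
    exact mapDomain_mem_orb φ τ hx
  · intro e he
    refine Finset.mem_image.mpr ⟨Finsupp.mapDomain ⇑(φ τ⁻¹) e, mapDomain_mem_orb φ τ⁻¹ he, ?_⟩
    rw [← Finsupp.mapDomain_comp, ← Equiv.Perm.coe_mul, ← map_mul, mul_inv_cancel, map_one,
      Equiv.Perm.coe_one, Finsupp.mapDomain_id]

lemma rename_osum (τ : Equiv.Perm (Fin n)) (a : ι →₀ ℕ) :
    MvPolynomial.rename ⇑(φ τ) (osum φ a) = osum φ a := by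
  unfold osum
  rw [map_sum]
  simp_rw [MvPolynomial.rename_monomial]
  conv_rhs => rw [← image_orb φ τ a]
  rw [Finset.sum_image (fun x _ y _ h => Finsupp.mapDomain_injective (φ τ).injective h)]

lemma coeff_osum (a e : ι →₀ ℕ) :
    MvPolynomial.coeff e (osum φ a) = if e ∈ orb φ a then 1 else 0 := by
  unfold osum
  rw [MvPolynomial.coeff_sum]
  simp_rw [MvPolynomial.coeff_monomial]
  exact Finset.sum_ite_eq' (orb φ a) e (fun _ => 1)

lemma ne_zero_of_mem_orb {a e : ι →₀ ℕ} (ha : a ≠ 0) (he : e ∈ orb φ a) : e ≠ 0 := by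
  obtain ⟨σ, rfl⟩ := (mem_orb φ).mp he
  intro h
  exact ha (Finsupp.mapDomain_injective (φ σ).injective
    (h.trans (Finsupp.mapDomain_zero).symm))

end Orbit

/-- combine a pair of exponent vectors on `Fin n` into one on `Fin n ⊕ Fin n`. -/
def DD (a b : Fin n →₀ ℕ) : Fin n ⊕ Fin n →₀ ℕ :=
  Finsupp.mapDomain Sum.inl a + Finsupp.mapDomain Sum.inr b

lemma DD_inl (a b : Fin n →₀ ℕ) (i : Fin n) : DD a b (Sum.inl i) = a i := by
  rw [DD, Finsupp.add_apply, Finsupp.mapDomain_apply Sum.inl_injective,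
    Finsupp.mapDomain_notin_range _ _ (by simp), add_zero]

lemma DD_inr (a b : Fin n →₀ ℕ) (i : Fin n) : DD a b (Sum.inr i) = b i := by
  rw [DD, Finsupp.add_apply, Finsupp.mapDomain_apply Sum.inr_injective,
    Finsupp.mapDomain_notin_range _ _ (by simp), zero_add]

lemma DD_inj {a b a' b' : Fin n →₀ ℕ} (h : DD a b = DD a' b') : a = a' ∧ b = b' := by
  constructor
  · ext i
    rw [← DD_inl a b i, ← DD_inl a' b' i, h]
  · ext i
    rw [← DD_inr a b i, ← DD_inr a' b' i, h]

lemma eq_DD (d : Fin n ⊕ Fin n →₀ ℕ) :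
    d = DD (Finsupp.comapDomain Sum.inl d Sum.inl_injective.injOn)
           (Finsupp.comapDomain Sum.inr d Sum.inr_injective.injOn) := by
  ext x
  cases x with
  | inl i => rw [DD_inl, Finsupp.comapDomain_apply]
  | inr i => rw [DD_inr, Finsupp.comapDomain_apply]

lemma mapd_DD (σ : Equiv.Perm (Fin n)) (a b : Fin n →₀ ℕ) :
    Finsupp.mapDomain ⇑(φD n σ) (DD a b)
      = DD (Finsupp.mapDomain ⇑σ a) (Finsupp.mapDomain ⇑σ b) := by
  unfold DD
  rw [Finsupp.mapDomain_add, ← Finsupp.mapDomain_comp, ← Finsupp.mapDomain_comp]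
  have h1 : ⇑(φD n σ) ∘ Sum.inl = Sum.inl ∘ ⇑σ := rfl
  have h2 : ⇑(φD n σ) ∘ Sum.inr = Sum.inr ∘ ⇑σ := rfl
  rw [h1, h2, Finsupp.mapDomain_comp, Finsupp.mapDomain_comp (f := ⇑σ) (g := Sum.inr)]

lemma monomial_mem_Bideal {d : Fin n ⊕ Fin n →₀ ℕ} (i : Fin n)
    (h1 : d (Sum.inl i) ≠ 0) (h2 : d (Sum.inr i) ≠ 0) (c : ℂ) :
    MvPolynomial.monomial d c ∈ Bideal n := by
  classical
  set s : Fin n ⊕ Fin n →₀ ℕ :=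
    Finsupp.single (Sum.inl i) 1 + Finsupp.single (Sum.inr i) 1 with hs
  have hle : s ≤ d := by
    rw [Finsupp.le_def]
    intro x
    have h1' : 1 ≤ d (Sum.inl i) := Nat.one_le_iff_ne_zero.mpr h1
    have h2' : 1 ≤ d (Sum.inr i) := Nat.one_le_iff_ne_zero.mpr h2
    rcases x with j | j
    · rcases eq_or_ne i j with rfl | hj
      · simpa [hs, Finsupp.single_apply] using h1'
      · simp [hs, Finsupp.single_apply, hj]
    · rcases eq_or_ne i j with rfl | hj
      · simpa [hs, Finsupp.single_apply] using h2'
      · simp [hs, Finsupp.single_apply, hj]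
  have hd : d = s + (d - s) := (add_tsub_cancel_of_le hle).symm
  have hmono : MvPolynomial.monomial d c =
      (MvPolynomial.X (Sum.inl i) * MvPolynomial.X (Sum.inr i)) *
        MvPolynomial.monomial (d - s) c := by
    have hX : MvPolynomial.X (R := ℂ) (Sum.inl i) * MvPolynomial.X (Sum.inr i)
        = MvPolynomial.monomial s 1 := by
      rw [hs]
      show MvPolynomial.monomial _ 1 * MvPolynomial.monomial _ 1 = _
      rw [MvPolynomial.monomial_mul, one_mul]
    rw [hX, MvPolynomial.monomial_mul, one_mul]
    conv_lhs => rw [hd]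
  rw [hmono]
  exact Ideal.mul_mem_right _ _ (Ideal.subset_span ⟨i, rfl⟩)

/-- the elementary symmetric polynomials in the `x` variables, upstairs. -/
def EXset (n : ℕ) : Set (MvPolynomial (Fin n ⊕ Fin n) ℂ) :=
  {p | ∃ k, 1 ≤ k ∧ k ≤ n ∧ p = MvPolynomial.rename Sum.inl (MvPolynomial.esymm (Fin n) ℂ k)}

/-- the elementary symmetric polynomials in the `y` variables, upstairs. -/
def FYset (n : ℕ) : Set (MvPolynomial (Fin n ⊕ Fin n) ℂ) :=
  {p | ∃ k, 1 ≤ k ∧ k ≤ n ∧ p = MvPolynomial.rename Sum.inr (MvPolynomial.esymm (Fin n) ℂ k)}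

/-- the candidate ideal, upstairs. -/
def K (n : ℕ) : Ideal (MvPolynomial (Fin n ⊕ Fin n) ℂ) :=
  Ideal.span (EXset n ∪ FYset n ∪
    Set.range fun i : Fin n => MvPolynomial.X (Sum.inl i) * MvPolynomial.X (Sum.inr i))

lemma Bideal_le_K : Bideal n ≤ K n :=
  Ideal.span_mono Set.subset_union_right

lemma exists_perm_extend (s : Finset (Fin n)) (g : Fin n → Fin n)
    (hg : Set.InjOn g ↑s) :
    ∃ π : Equiv.Perm (Fin n), ∀ i ∈ s, π i = g i := by
  classical
  set t := s.image g with ht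
  have hcard : s.card = t.card := (Finset.card_image_of_injOn hg).symm
  have hb : Function.Bijective
      (fun x : {x // x ∈ s} => (⟨g x, Finset.mem_image_of_mem g x.2⟩ : {x // x ∈ t})) := by
    rw [Fintype.bijective_iff_injective_and_card]
    constructor
    · intro x y hxy
      exact Subtype.ext (hg x.2 y.2 (congrArg Subtype.val hxy))
    · simp only [Fintype.card_coe]
      exact hcard
  let e1 := Equiv.ofBijective _ hb
  have hcc : Fintype.card {x // ¬ x ∈ s} = Fintype.card {x // ¬ x ∈ t} := by
    rw [Fintype.card_subtype_compl, Fintype.card_subtype_compl]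
    simp only [Fintype.card_coe]
    rw [hcard]
  let e2 := Fintype.equivOfCardEq hcc
  refine ⟨(Equiv.sumCompl (· ∈ s)).symm.trans ((e1.sumCongr e2).trans
    (Equiv.sumCompl (· ∈ t))), ?_⟩
  intro i hi
  simp only [Equiv.trans_apply]
  rw [Equiv.sumCompl_symm_apply_of_pos hi]
  simp only [Equiv.sumCongr_apply, Sum.map_inl, Equiv.sumCompl_apply_inl]
  rfl

lemma constantCoeff_esymm' (k : ℕ) (hk : 1 ≤ k) :
    MvPolynomial.constantCoeff (MvPolynomial.esymm (Fin n) ℂ k) = 0 := by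
  rw [MvPolynomial.esymm, map_sum]
  refine Finset.sum_eq_zero fun S hS => ?_
  rw [Finset.mem_powersetCard] at hS
  obtain ⟨x, hx⟩ := Finset.card_pos.mp (lt_of_lt_of_le hk (le_of_eq hS.2.symm))
  rw [map_prod]
  exact Finset.prod_eq_zero hx (by simp)

lemma aeval_mem_span {ι τ' : Type} (f : ι → MvPolynomial τ' ℂ)
    (hf : ∀ i, MvPolynomial.constantCoeff (f i) = 0) (p : MvPolynomial ι ℂ)
    (h0 : MvPolynomial.constantCoeff (MvPolynomial.aeval f p) = 0) :
    MvPolynomial.aeval f p ∈ Ideal.span (Set.range f) := by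
  have key : ∃ c : ℂ, MvPolynomial.aeval f p - MvPolynomial.C c ∈ Ideal.span (Set.range f) := by
    clear h0
    induction p using MvPolynomial.induction_on with
    | C r => exact ⟨r, by simp⟩
    | add p q hp hq =>
      obtain ⟨c1, hc1⟩ := hp
      obtain ⟨c2, hc2⟩ := hq
      refine ⟨c1 + c2, ?_⟩
      have : MvPolynomial.aeval f (p + q) - MvPolynomial.C (c1 + c2)
          = (MvPolynomial.aeval f p - MvPolynomial.C c1)
            + (MvPolynomial.aeval f q - MvPolynomial.C c2) := by
        rw [map_add, MvPolynomial.C_add]; ring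
      rw [this]
      exact Ideal.add_mem _ hc1 hc2
    | mul_X p i hp =>
      refine ⟨0, ?_⟩
      rw [map_mul, MvPolynomial.aeval_X, MvPolynomial.C_0, sub_zero]
      exact Ideal.mul_mem_left _ _ (Ideal.subset_span ⟨i, rfl⟩)
  obtain ⟨c, hc⟩ := key
  have hker : Ideal.span (Set.range f) ≤ RingHom.ker (MvPolynomial.constantCoeff) := by
    rw [Ideal.span_le]
    rintro _ ⟨i, rfl⟩
    exact hf i
  have hcc := hker hc
  rw [RingHom.mem_ker, map_sub, h0, MvPolynomial.constantCoeff_C, zero_sub, neg_eq_zero] at hcc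
  rw [hcc, MvPolynomial.C_0, sub_zero] at hc
  exact hc

/-- the set of elementary symmetric polynomials `e_1, …, e_n` in `MvPolynomial (Fin n) ℂ`. -/
def esymmSet (n : ℕ) : Set (MvPolynomial (Fin n) ℂ) :=
  {q | ∃ k, 1 ≤ k ∧ k ≤ n ∧ q = MvPolynomial.esymm (Fin n) ℂ k}

lemma posum_mem {a : Fin n →₀ ℕ} (ha : a ≠ 0) :
    osum (MonoidHom.id (Equiv.Perm (Fin n))) a ∈ Ideal.span (esymmSet n) := by
  have hsym : MvPolynomial.IsSymmetric (osum (MonoidHom.id (Equiv.Perm (Fin n))) a) :=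
    fun e => rename_osum (MonoidHom.id (Equiv.Perm (Fin n))) e a
  obtain ⟨p, hp⟩ := MvPolynomial.esymmAlgHom_surjective (R := ℂ) (σ := Fin n) (n := n)
    (by simp) ⟨_, hsym⟩
  have hval : MvPolynomial.aeval (fun i : Fin n => MvPolynomial.esymm (Fin n) ℂ (i + 1)) p
      = osum (MonoidHom.id (Equiv.Perm (Fin n))) a := by
    rw [← MvPolynomial.esymmAlgHom_apply, hp]
  have h0 : MvPolynomial.constantCoeff (osum (MonoidHom.id (Equiv.Perm (Fin n))) a) = 0 := by
    rw [MvPolynomial.constantCoeff_eq]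
    show MvPolynomial.coeff 0 _ = 0
    rw [coeff_osum]
    rw [if_neg]
    intro h0mem
    exact ne_zero_of_mem_orb _ ha h0mem rfl
  have hmem := aeval_mem_span (fun i : Fin n => MvPolynomial.esymm (Fin n) ℂ (i + 1))
    (fun i => constantCoeff_esymm' _ (Nat.succ_le_succ (Nat.zero_le _))) p
    (by rw [hval]; exact h0)
  rw [hval] at hmem
  refine Ideal.span_mono ?_ hmem
  rintro _ ⟨i, rfl⟩
  exact ⟨(i : ℕ) + 1, Nat.succ_le_succ (Nat.zero_le _), Nat.succ_le_of_lt i.isLt, rfl⟩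

lemma rename_inl_mem_K {q : MvPolynomial (Fin n) ℂ} (hq : q ∈ Ideal.span (esymmSet n)) :
    MvPolynomial.rename (Sum.inl : Fin n → Fin n ⊕ Fin n) q ∈ K n := by
  have hmap : MvPolynomial.rename (Sum.inl : Fin n → Fin n ⊕ Fin n) q ∈
      Ideal.map (MvPolynomial.rename (R := ℂ) (Sum.inl : Fin n → Fin n ⊕ Fin n))
        (Ideal.span (esymmSet n)) := Ideal.mem_map_of_mem _ hq
  rw [Ideal.map_span] at hmap
  refine Ideal.span_le.mpr ?_ hmap
  rintro _ ⟨q', ⟨k, hk1, hk2, rfl⟩, rfl⟩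
  exact Ideal.subset_span (Or.inl (Or.inl ⟨k, hk1, hk2, rfl⟩))

lemma rename_inr_mem_K {q : MvPolynomial (Fin n) ℂ} (hq : q ∈ Ideal.span (esymmSet n)) :
    MvPolynomial.rename (Sum.inr : Fin n → Fin n ⊕ Fin n) q ∈ K n := by
  have hmap : MvPolynomial.rename (Sum.inr : Fin n → Fin n ⊕ Fin n) q ∈
      Ideal.map (MvPolynomial.rename (R := ℂ) (Sum.inr : Fin n → Fin n ⊕ Fin n))
        (Ideal.span (esymmSet n)) := Ideal.mem_map_of_mem _ hq
  rw [Ideal.map_span] at hmap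
  refine Ideal.span_le.mpr ?_ hmap
  rintro _ ⟨q', ⟨k, hk1, hk2, rfl⟩, rfl⟩
  exact Ideal.subset_span (Or.inl (Or.inr ⟨k, hk1, hk2, rfl⟩))

lemma osum_mem_K {d : Fin n ⊕ Fin n →₀ ℕ} (hd : d ≠ 0) : osum (φD n) d ∈ K n := by
  classical
  by_cases hover : ∃ i, d (Sum.inl i) ≠ 0 ∧ d (Sum.inr i) ≠ 0
  · obtain ⟨i, hi1, hi2⟩ := hover
    refine Bideal_le_K (Ideal.sum_mem _ fun e he => ?_)
    obtain ⟨σ, rfl⟩ := (mem_orb _).mp he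
    refine monomial_mem_Bideal (σ i) ?_ ?_ 1
    · rw [show (Sum.inl (σ i) : Fin n ⊕ Fin n) = (φD n σ) (Sum.inl i) from rfl,
        Finsupp.mapDomain_apply (φD n σ).injective]
      exact hi1
    · rw [show (Sum.inr (σ i) : Fin n ⊕ Fin n) = (φD n σ) (Sum.inr i) from rfl,
        Finsupp.mapDomain_apply (φD n σ).injective]
      exact hi2
  · push_neg at hover
    set a : Fin n →₀ ℕ := Finsupp.comapDomain Sum.inl d Sum.inl_injective.injOn with ha
    set b : Fin n →₀ ℕ := Finsupp.comapDomain Sum.inr d Sum.inr_injective.injOn with hb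
    have hab : d = DD a b := eq_DD d
    have hdisj : ∀ i, a i = 0 ∨ b i = 0 := by
      intro i
      by_cases h : d (Sum.inl i) = 0
      · left
        simpa [ha, Finsupp.comapDomain_apply] using h
      · right
        simpa [hb, Finsupp.comapDomain_apply] using hover i h
    set idh := MonoidHom.id (Equiv.Perm (Fin n)) with hidh
    set s1 := (orb idh a ×ˢ orb idh b).filter
      (fun p : (Fin n →₀ ℕ) × (Fin n →₀ ℕ) => ∀ i, p.1 i = 0 ∨ p.2 i = 0) with hs1
    set s2 := (orb idh a ×ˢ orb idh b).filter
      (fun p : (Fin n →₀ ℕ) × (Fin n →₀ ℕ) => ¬ ∀ i, p.1 i = 0 ∨ p.2 i = 0) with hs2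
    have expand : MvPolynomial.rename (Sum.inl : Fin n → Fin n ⊕ Fin n) (osum idh a)
        * MvPolynomial.rename (Sum.inr : Fin n → Fin n ⊕ Fin n) (osum idh b)
        = ∑ p ∈ orb idh a ×ˢ orb idh b, MvPolynomial.monomial (DD p.1 p.2) (1:ℂ) := by
      unfold osum
      rw [map_sum, map_sum, Finset.sum_mul_sum, Finset.sum_product]
      simp_rw [MvPolynomial.rename_monomial, MvPolynomial.monomial_mul, mul_one]
      rfl
    have hsplit : ∑ p ∈ orb idh a ×ˢ orb idh b, MvPolynomial.monomial (DD p.1 p.2) (1:ℂ)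
        = (∑ p ∈ s1, MvPolynomial.monomial (DD p.1 p.2) (1:ℂ))
          + ∑ p ∈ s2, MvPolynomial.monomial (DD p.1 p.2) (1:ℂ) :=
      (Finset.sum_filter_add_sum_filter_not _ _ _).symm
    have hrem : (∑ p ∈ s2, MvPolynomial.monomial (DD p.1 p.2) (1:ℂ)) ∈ K n := by
      refine Bideal_le_K (Ideal.sum_mem _ fun p hp => ?_)
      have hp2 := (Finset.mem_filter.mp hp).2
      push_neg at hp2
      obtain ⟨i, hi1, hi2⟩ := hp2
      exact monomial_mem_Bideal i (by rw [DD_inl]; exact hi1) (by rw [DD_inr]; exact hi2) 1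
    have hset : orb (φD n) d
        = s1.image (fun p : (Fin n →₀ ℕ) × (Fin n →₀ ℕ) => DD p.1 p.2) := by
      ext e
      constructor
      · intro he
        obtain ⟨σ, rfl⟩ := (mem_orb _).mp he
        refine Finset.mem_image.mpr ⟨(Finsupp.mapDomain (⇑σ) a, Finsupp.mapDomain (⇑σ) b), ?_, ?_⟩
        · rw [hs1, Finset.mem_filter]
          refine ⟨Finset.mem_product.mpr ⟨(mem_orb idh).mpr ⟨σ, rfl⟩,
            (mem_orb idh).mpr ⟨σ, rfl⟩⟩, ?_⟩
          intro i
          obtain ⟨j, rfl⟩ := σ.surjective i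
          rw [Finsupp.mapDomain_apply σ.injective, Finsupp.mapDomain_apply σ.injective]
          exact hdisj j
        · rw [hab, mapd_DD]
      · intro he
        obtain ⟨⟨a', b'⟩, hp, rfl⟩ := Finset.mem_image.mp he
        rw [hs1, Finset.mem_filter, Finset.mem_product] at hp
        obtain ⟨⟨hpa, hpb⟩, hpd⟩ := hp
        obtain ⟨σ, rfl⟩ := (mem_orb idh).mp hpa
        obtain ⟨τ, rfl⟩ := (mem_orb idh).mp hpb
        have hdisj' : ∀ i, Finsupp.mapDomain (⇑σ) a i = 0 ∨ Finsupp.mapDomain (⇑τ) b i = 0 :=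
          hpd
        have hInj : Set.InjOn (fun i => if i ∈ a.support then σ i else τ i)
            ↑(a.support ∪ b.support) := by
          intro x hx y hy hxy
          simp only at hxy
          by_cases hxa : x ∈ a.support <;> by_cases hya : y ∈ a.support
          · rw [if_pos hxa, if_pos hya] at hxy
            exact σ.injective hxy
          · rw [if_pos hxa, if_neg hya] at hxy
            exfalso
            have hyb : y ∈ b.support := by
              rcases Finset.mem_union.mp hy with h | h
              · exact absurd h hya
              · exact h
            have h1 : Finsupp.mapDomain (⇑σ) a (σ x) ≠ 0 := by
              rw [Finsupp.mapDomain_apply σ.injective]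
              exact Finsupp.mem_support_iff.mp hxa
            have h2 : Finsupp.mapDomain (⇑τ) b (τ y) ≠ 0 := by
              rw [Finsupp.mapDomain_apply τ.injective]
              exact Finsupp.mem_support_iff.mp hyb
            rcases hdisj' (σ x) with h | h
            · exact h1 h
            · rw [hxy] at h
              exact h2 h
          · rw [if_neg hxa, if_pos hya] at hxy
            exfalso
            have hxb : x ∈ b.support := by
              rcases Finset.mem_union.mp hx with h | h
              · exact absurd h hxa
              · exact h
            have h1 : Finsupp.mapDomain (⇑σ) a (σ y) ≠ 0 := by
              rw [Finsupp.mapDomain_apply σ.injective]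
              exact Finsupp.mem_support_iff.mp hya
            have h2 : Finsupp.mapDomain (⇑τ) b (τ x) ≠ 0 := by
              rw [Finsupp.mapDomain_apply τ.injective]
              exact Finsupp.mem_support_iff.mp hxb
            rcases hdisj' (σ y) with h | h
            · exact h1 h
            · rw [← hxy] at h
              exact h2 h
          · rw [if_neg hxa, if_neg hya] at hxy
            exact τ.injective hxy
        obtain ⟨π, hπ⟩ := exists_perm_extend (a.support ∪ b.support)
          (fun i => if i ∈ a.support then σ i else τ i) hInj
        refine (mem_orb _).mpr ⟨π, ?_⟩
        show Finsupp.mapDomain (⇑(φD n π)) d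
            = DD (Finsupp.mapDomain (⇑σ) a) (Finsupp.mapDomain (⇑τ) b)
        rw [hab, mapd_DD]
        have hA : Finsupp.mapDomain (⇑π) a = Finsupp.mapDomain (⇑σ) a := by
          apply Finsupp.mapDomain_congr
          intro x hx
          rw [hπ x (Finset.mem_union_left _ hx), if_pos hx]
        have hB : Finsupp.mapDomain (⇑π) b = Finsupp.mapDomain (⇑τ) b := by
          apply Finsupp.mapDomain_congr
          intro x hx
          have hxa : x ∉ a.support := by
            intro hxa
            rcases hdisj x with h | h
            · exact Finsupp.mem_support_iff.mp hxa h
            · exact Finsupp.mem_support_iff.mp hx h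
          rw [hπ x (Finset.mem_union_right _ hx), if_neg hxa]
        rw [hA, hB]
    have hsum1 : ∑ p ∈ s1, MvPolynomial.monomial (DD p.1 p.2) (1:ℂ) = osum (φD n) d := by
      unfold osum
      rw [hset, Finset.sum_image]
      intro x hx y hy hxy
      have h := DD_inj hxy
      exact Prod.ext h.1 h.2
    have habne : a ≠ 0 ∨ b ≠ 0 := by
      by_contra h
      push_neg at h
      exact hd (by rw [hab, h.1, h.2]; simp [DD])
    have hosum : osum (φD n) d =
        MvPolynomial.rename (Sum.inl : Fin n → Fin n ⊕ Fin n) (osum idh a)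
        * MvPolynomial.rename (Sum.inr : Fin n → Fin n ⊕ Fin n) (osum idh b)
        - ∑ p ∈ s2, MvPolynomial.monomial (DD p.1 p.2) (1:ℂ) := by
      rw [expand, hsplit, hsum1]
      ring
    rw [hosum]
    refine Ideal.sub_mem _ ?_ hrem
    rcases habne with h | h
    · exact Ideal.mul_mem_right _ _ (rename_inl_mem_K (posum_mem h))
    · exact Ideal.mul_mem_left _ _ (rename_inr_mem_K (posum_mem h))

lemma invariant_mem_K (Q : MvPolynomial (Fin n ⊕ Fin n) ℂ)
    (hinv : ∀ σ : Equiv.Perm (Fin n), MvPolynomial.rename (Sum.map ⇑σ ⇑σ) Q = Q)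
    (h0 : MvPolynomial.coeff 0 Q = 0) : Q ∈ K n := by
  classical
  suffices H : ∀ m (Q : MvPolynomial (Fin n ⊕ Fin n) ℂ), Q.support.card ≤ m →
      (∀ σ : Equiv.Perm (Fin n), MvPolynomial.rename (Sum.map ⇑σ ⇑σ) Q = Q) →
      MvPolynomial.coeff 0 Q = 0 → Q ∈ K n from H Q.support.card Q le_rfl hinv h0
  intro m
  induction m with
  | zero =>
    intro Q hcard _ _
    have hsupp : Q.support = ∅ := Finset.card_eq_zero.mp (Nat.le_zero.mp hcard)
    rw [MvPolynomial.support_eq_empty.mp hsupp]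
    exact Ideal.zero_mem _
  | succ m ih =>
    intro Q hcard hinv h0
    by_cases hQ : Q = 0
    · rw [hQ]
      exact Ideal.zero_mem _
    obtain ⟨d, hd⟩ := MvPolynomial.support_nonempty.mpr hQ
    have hdne : d ≠ 0 := by
      intro h
      rw [h] at hd
      exact MvPolynomial.mem_support_iff.mp hd h0
    set c := MvPolynomial.coeff d Q with hc
    have horbcoeff : ∀ e ∈ orb (φD n) d, MvPolynomial.coeff e Q = c := by
      intro e he
      obtain ⟨σ, rfl⟩ := (mem_orb _).mp he
      rw [φD_coe]
      conv_lhs => rw [← hinv σ]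
      rw [MvPolynomial.coeff_rename_mapDomain _ (σ.injective.sumMap σ.injective)]
    set Q' := Q - MvPolynomial.C c * osum (φD n) d with hQ'
    have hcoeffQ' : ∀ e, MvPolynomial.coeff e Q'
        = MvPolynomial.coeff e Q - c * (if e ∈ orb (φD n) d then 1 else 0) := by
      intro e
      rw [hQ', MvPolynomial.coeff_sub, MvPolynomial.coeff_C_mul, coeff_osum]
    have hsupp : Q'.support ⊆ Q.support.erase d := by
      intro e he
      have hne : MvPolynomial.coeff e Q' ≠ 0 := MvPolynomial.mem_support_iff.mp he
      rw [hcoeffQ' e] at hne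
      by_cases hmem : e ∈ orb (φD n) d
      · rw [if_pos hmem, horbcoeff e hmem, mul_one, sub_self] at hne
        exact absurd rfl hne
      · rw [if_neg hmem, mul_zero, sub_zero] at hne
        refine Finset.mem_erase.mpr ⟨?_, MvPolynomial.mem_support_iff.mpr hne⟩
        intro heq
        rw [heq] at hmem
        exact hmem (self_mem_orb _ d)
    have hcard' : Q'.support.card ≤ m := by
      have hle := Finset.card_le_card hsupp
      rw [Finset.card_erase_of_mem hd] at hle
      omega
    have hinv' : ∀ σ : Equiv.Perm (Fin n), MvPolynomial.rename (Sum.map ⇑σ ⇑σ) Q' = Q' := by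
      intro σ
      rw [hQ', map_sub, map_mul, hinv σ, MvPolynomial.rename_C]
      congr 2
      rw [← φD_coe]
      exact rename_osum (φD n) σ d
    have h0' : MvPolynomial.coeff 0 Q' = 0 := by
      rw [hcoeffQ' 0, h0, if_neg, mul_zero, sub_zero]
      intro h
      exact ne_zero_of_mem_orb _ hdne h rfl
    have hQ'K := ih Q' hcard' hinv' h0'
    have hdecomp : Q = Q' + MvPolynomial.C c * osum (φD n) d := by
      rw [hQ']
      ring
    rw [hdecomp]
    exact Ideal.add_mem _ hQ'K (Ideal.mul_mem_left _ _ (osum_mem_K hdne))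

lemma permB_mk (σ : Equiv.Perm (Fin n)) (q : MvPolynomial (Fin n ⊕ Fin n) ℂ) :
    permB n σ (mkB n q) = mkB n (MvPolynomial.rename (Sum.map ⇑σ ⇑σ) q) := by
  rw [permB, Ideal.Quotient.mkₐ_eq_mk]
  rfl

lemma ev0_mk (q : MvPolynomial (Fin n ⊕ Fin n) ℂ) :
    ev0 n (mkB n q) = MvPolynomial.constantCoeff q := by
  rw [ev0, Ideal.Quotient.mkₐ_eq_mk]
  show MvPolynomial.aeval (fun _ => (0:ℂ)) q = _
  rw [show (fun _ : Fin n ⊕ Fin n => (0:ℂ)) = (0 : Fin n ⊕ Fin n → ℂ) from rfl,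
    MvPolynomial.aeval_zero]
  simp

lemma eX_mk (k : ℕ) :
    eX n k = mkB n (MvPolynomial.rename Sum.inl (MvPolynomial.esymm (Fin n) ℂ k)) := by
  simp only [eX, xv, MvPolynomial.esymm, map_sum, map_prod, MvPolynomial.rename_X]

lemma fY_mk (k : ℕ) :
    fY n k = mkB n (MvPolynomial.rename Sum.inr (MvPolynomial.esymm (Fin n) ℂ k)) := by
  simp only [fY, yv, MvPolynomial.esymm, map_sum, map_prod, MvPolynomial.rename_X]

end JnAux

/-- For every `n ≥ 1`, the ideal `Jₙ` of `Bₙ` generated by the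
`Sₙ`-invariant elements with zero constant term equals the ideal generated by the
elementary symmetric polynomials `e₁,…,eₙ` in `x₁,…,xₙ` together with the elementary
symmetric polynomials `f₁,…,fₙ` in `y₁,…,yₙ`. -/
theorem Jn_eq_span_elementary_symmetric (n : ℕ) (hn : 1 ≤ n) :
    Jn n = Ideal.span ({p | ∃ k, 1 ≤ k ∧ k ≤ n ∧ p = eX n k} ∪
                       {p | ∃ k, 1 ≤ k ∧ k ≤ n ∧ p = fY n k}) := by
  apply le_antisymm
  · rw [Jn, Ideal.span_le]
    rintro p ⟨hinv, hev⟩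
    obtain ⟨Q₀, rfl⟩ := Ideal.Quotient.mk_surjective p
    set Q : MvPolynomial (Fin n ⊕ Fin n) ℂ :=
      ((n.factorial : ℂ))⁻¹ • ∑ σ : Equiv.Perm (Fin n), MvPolynomial.rename (Sum.map ⇑σ ⇑σ) Q₀
      with hQdef
    have key : mkB n Q = mkB n Q₀ := by
      rw [hQdef, map_smul, map_sum]
      have hterm : ∀ σ : Equiv.Perm (Fin n),
          mkB n (MvPolynomial.rename (Sum.map ⇑σ ⇑σ) Q₀) = mkB n Q₀ := by
        intro σ
        rw [← JnAux.permB_mk]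
        exact hinv σ
      rw [Finset.sum_congr rfl fun σ _ => hterm σ, Finset.sum_const, Finset.card_univ,
        Fintype.card_perm, Fintype.card_fin, ← Nat.cast_smul_eq_nsmul ℂ, smul_smul,
        inv_mul_cancel₀ (by exact_mod_cast Nat.factorial_ne_zero n), one_smul]
    have hQinv : ∀ τ : Equiv.Perm (Fin n), MvPolynomial.rename (Sum.map ⇑τ ⇑τ) Q = Q := by
      intro τ
      rw [hQdef, map_smul, map_sum]
      congr 1
      have hcomp : ∀ σ : Equiv.Perm (Fin n),
          MvPolynomial.rename (Sum.map ⇑τ ⇑τ) (MvPolynomial.rename (Sum.map ⇑σ ⇑σ) Q₀)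
            = MvPolynomial.rename (Sum.map ⇑(τ * σ) ⇑(τ * σ)) Q₀ := by
        intro σ
        rw [MvPolynomial.rename_rename]
        have h : (Sum.map ⇑τ ⇑τ) ∘ (Sum.map ⇑σ ⇑σ) = Sum.map ⇑(τ * σ) ⇑(τ * σ) := by
          funext x
          cases x <;> rfl
        rw [h]
      rw [Finset.sum_congr rfl fun σ _ => hcomp σ]
      exact Fintype.sum_equiv (Equiv.mulLeft τ) _ _ fun σ => rfl
    have hQ0 : MvPolynomial.coeff 0 Q = 0 := by
      have h00 : MvPolynomial.constantCoeff Q₀ = 0 := by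
        rw [← JnAux.ev0_mk]
        exact hev
      rw [hQdef, MvPolynomial.coeff_smul, MvPolynomial.coeff_sum]
      have hz : ∀ σ : Equiv.Perm (Fin n),
          MvPolynomial.coeff 0 (MvPolynomial.rename (Sum.map ⇑σ ⇑σ) Q₀) = 0 := by
        intro σ
        rw [show MvPolynomial.coeff 0 (MvPolynomial.rename (Sum.map ⇑σ ⇑σ) Q₀)
            = MvPolynomial.constantCoeff (MvPolynomial.rename (Sum.map ⇑σ ⇑σ) Q₀) from rfl,
          MvPolynomial.constantCoeff_rename, h00]
      rw [Finset.sum_congr rfl fun σ _ => hz σ, Finset.sum_const_zero, smul_zero]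
    have hQK : Q ∈ JnAux.K n := JnAux.invariant_mem_K Q hQinv hQ0
    have hfinal : mkB n Q ∈ Ideal.span ({p | ∃ k, 1 ≤ k ∧ k ≤ n ∧ p = eX n k} ∪
        {p | ∃ k, 1 ≤ k ∧ k ≤ n ∧ p = fY n k}) := by
      have hmap : mkB n Q ∈ Ideal.map (Ideal.Quotient.mk (Bideal n)) (JnAux.K n) :=
        Ideal.mem_map_of_mem _ hQK
      rw [JnAux.K, Ideal.map_span] at hmap
      refine Ideal.span_le.mpr ?_ hmap
      rintro _ ⟨q, hq, rfl⟩
      simp only [JnAux.EXset, JnAux.FYset, Set.mem_union, Set.mem_setOf_eq,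
        Set.mem_range] at hq
      rcases hq with (⟨k, h1, h2, rfl⟩ | ⟨k, h1, h2, rfl⟩) | ⟨i, rfl⟩
      · exact Ideal.subset_span (Or.inl ⟨k, h1, h2, (JnAux.eX_mk k).symm⟩)
      · exact Ideal.subset_span (Or.inr ⟨k, h1, h2, (JnAux.fY_mk k).symm⟩)
      · have hz : Ideal.Quotient.mk (Bideal n)
            (MvPolynomial.X (Sum.inl i) * MvPolynomial.X (Sum.inr i)) = 0 :=
          Ideal.Quotient.eq_zero_iff_mem.mpr (Ideal.subset_span ⟨i, rfl⟩)
        rw [hz]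
        exact Ideal.zero_mem _
    exact key ▸ hfinal
  · rw [Ideal.span_le]
    rintro p hp
    simp only [Set.mem_union, Set.mem_setOf_eq] at hp
    rw [Jn]
    rcases hp with ⟨k, h1, h2, rfl⟩ | ⟨k, h1, h2, rfl⟩
    · refine Ideal.subset_span ⟨fun σ => ?_, ?_⟩
      · rw [JnAux.eX_mk, JnAux.permB_mk]
        congr 1
        rw [MvPolynomial.rename_rename]
        have hcomp : (Sum.map ⇑σ ⇑σ) ∘ (Sum.inl : Fin n → Fin n ⊕ Fin n)
            = Sum.inl ∘ ⇑σ := rfl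
        rw [hcomp, ← MvPolynomial.rename_rename, MvPolynomial.esymm_isSymmetric (Fin n) ℂ k σ]
      · rw [JnAux.eX_mk, JnAux.ev0_mk, MvPolynomial.constantCoeff_rename,
          JnAux.constantCoeff_esymm' k h1]
    · refine Ideal.subset_span ⟨fun σ => ?_, ?_⟩
      · rw [JnAux.fY_mk, JnAux.permB_mk]
        congr 1
        rw [MvPolynomial.rename_rename]
        have hcomp : (Sum.map ⇑σ ⇑σ) ∘ (Sum.inr : Fin n → Fin n ⊕ Fin n)
            = Sum.inr ∘ ⇑σ := rfl
        rw [hcomp, ← MvPolynomial.rename_rename, MvPolynomial.esymm_isSymmetric (Fin n) ℂ k σ]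
      · rw [JnAux.fY_mk, JnAux.ev0_mk, MvPolynomial.constantCoeff_rename,
          JnAux.constantCoeff_esymm' k h1]


end
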